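/- For α, β, γ ∈ R with α² + β² − γ² > 0, the Lie algebra with brackets [Y1,Y2] = −α Y1 + β Y2, [Y2,Y3] = γ Y2 + α Y3, [Y3,Y1] = −γ Y1 − β Y3 is isomorphic to the algebra with brackets [Z1,Z2] = −b Z2, [Z2,Z3] = 0, [Z3,Z1] = b Z3, where b = sqrt(α² + β² − γ²). -/

import Mathlib

/-- The skew-symmetric bilinear bracket on `ℝ³` determined by
`[e0,e1] = B01`, `[e1,e2] = B12`, `[e2,e0] = B20`. -/
def bracketOf (B01 B12 B20 : Fin 3 → ℝ) (x y : Fin 3 → ℝ) : Fin 3 → ℝ :=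
  (x 0 * y 1 - x 1 * y 0) • B01 + (x 1 * y 2 - x 2 * y 1) • B12
    + (x 2 * y 0 - x 0 * y 2) • B20

/-- A linear equivalence of `ℝ³` with prescribed first output coordinate,
pivoting on `a0 ≠ 0`. -/
noncomputable def rowEquiv0 (a0 a1 a2 : ℝ) (h : a0 ≠ 0) : (Fin 3 → ℝ) ≃ₗ[ℝ] (Fin 3 → ℝ) where
  toFun x := ![a0 * x 0 + a1 * x 1 + a2 * x 2, x 1, x 2]
  map_add' x y := by funext i; fin_cases i <;> simp <;> ring
  map_smul' c x := by funext i; fin_cases i <;> simp <;> ring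
  invFun y := ![(y 0 - a1 * y 1 - a2 * y 2) / a0, y 1, y 2]
  left_inv x := by funext i; fin_cases i <;> first | rfl | (simp only [Fin.zero_eta, Fin.mk_one, Fin.reduceFinMk, Matrix.cons_val]; field_simp; try ring)
  right_inv y := by funext i; fin_cases i <;> first | rfl | (simp only [Fin.zero_eta, Fin.mk_one, Fin.reduceFinMk, Matrix.cons_val]; field_simp; try ring)

/-- A linear equivalence of `ℝ³` with prescribed first output coordinate,
pivoting on `a1 ≠ 0`. -/
noncomputable def rowEquiv1 (a0 a1 a2 : ℝ) (h : a1 ≠ 0) : (Fin 3 → ℝ) ≃ₗ[ℝ] (Fin 3 → ℝ) where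
  toFun x := ![a0 * x 0 + a1 * x 1 + a2 * x 2, x 0, x 2]
  map_add' x y := by funext i; fin_cases i <;> simp <;> ring
  map_smul' c x := by funext i; fin_cases i <;> simp <;> ring
  invFun y := ![y 1, (y 0 - a0 * y 1 - a2 * y 2) / a1, y 2]
  left_inv x := by funext i; fin_cases i <;> first | rfl | (simp only [Fin.zero_eta, Fin.mk_one, Fin.reduceFinMk, Matrix.cons_val]; field_simp; try ring)
  right_inv y := by funext i; fin_cases i <;> first | rfl | (simp only [Fin.zero_eta, Fin.mk_one, Fin.reduceFinMk, Matrix.cons_val]; field_simp; try ring)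

lemma exists_row (a0 a1 a2 : ℝ) (h : a0 ≠ 0 ∨ a1 ≠ 0) :
    ∃ A : (Fin 3 → ℝ) ≃ₗ[ℝ] (Fin 3 → ℝ),
      ∀ x, A x 0 = a0 * x 0 + a1 * x 1 + a2 * x 2 := by
  rcases h with h | h
  · exact ⟨rowEquiv0 a0 a1 a2 h, fun x => rfl⟩
  · exact ⟨rowEquiv1 a0 a1 a2 h, fun x => rfl⟩

lemma src_eq (α β γ : ℝ) (x y : Fin 3 → ℝ) :
    bracketOf ![-α, β, 0] ![0, γ, α] ![-γ, 0, -β] x y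
      = (β * x 0 + α * x 1 - γ * x 2) • y - (β * y 0 + α * y 1 - γ * y 2) • x := by
  funext i; fin_cases i <;> simp [bracketOf] <;> ring

lemma tgt_eq (b : ℝ) (x y : Fin 3 → ℝ) :
    bracketOf ![0, -b, 0] ![0, 0, 0] ![0, 0, b] x y
      = (-(b * x 0)) • y - (-(b * y 0)) • x := by
  funext i; fin_cases i <;> simp [bracketOf] <;> ring

theorem dual_VIII_iso_pos (α β γ : ℝ) (h : 0 < α ^ 2 + β ^ 2 - γ ^ 2) :
    ∃ A : (Fin 3 → ℝ) ≃ₗ[ℝ] (Fin 3 → ℝ),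
      ∀ x y, A (bracketOf ![-α, β, 0] ![0, γ, α] ![-γ, 0, -β] x y) =
        bracketOf ![0, -Real.sqrt (α ^ 2 + β ^ 2 - γ ^ 2), 0] ![0, 0, 0]
          ![0, 0, Real.sqrt (α ^ 2 + β ^ 2 - γ ^ 2)] (A x) (A y) := by
  set b := Real.sqrt (α ^ 2 + β ^ 2 - γ ^ 2) with hbdef
  have hb : 0 < b := Real.sqrt_pos.mpr h
  have hbne : b ≠ 0 := ne_of_gt hb
  have hαβ : -β / b ≠ 0 ∨ -α / b ≠ 0 := by
    by_contra hc
    push_neg at hc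
    obtain ⟨h1, h2⟩ := hc
    have hβ : β = 0 := by
      have := (div_eq_zero_iff.mp h1).resolve_right hbne; linarith [neg_eq_zero.mp this]
    have hα : α = 0 := by
      have := (div_eq_zero_iff.mp h2).resolve_right hbne; linarith [neg_eq_zero.mp this]
    rw [hα, hβ] at h
    nlinarith [sq_nonneg γ]
  obtain ⟨A, hA⟩ := exists_row (-β / b) (-α / b) (γ / b) hαβ
  refine ⟨A, fun x y => ?_⟩
  have hs : ∀ z : Fin 3 → ℝ, -(b * A z 0) = β * z 0 + α * z 1 - γ * z 2 := by
    intro z; rw [hA]; field_simp; ring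
  rw [src_eq, tgt_eq, hs x, hs y, map_sub, map_smul, map_smul]
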